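/- Let k be a commutative ring and let C be a k-linear rigid monoidal category (composition and the tensor product of morphisms are k-bilinear) in which the canonical end 𝔸 = ∫_{X∈C} X ⊗ X^∨ exists, equipped with the multiplication γ : 𝔸 ⊗ 𝔸 → 𝔸 determined by π_X ∘ γ = (X ◁ d_X ▷ X^∨) ∘ (π_X ⊗ π_X) and the unit u : 𝟙 → 𝔸 determined by π_X ∘ u = b_X. Equip the k-module C(𝟙, 𝔸) with the product f · g := γ ∘ (f ⊗ g) ∘ λ_𝟙^{-1} and unit u. Then the map Θ : C(𝟙, 𝔸) → End(𝟭_C) sending f to the natural transformation of the identity functor whose component at X is the composite X ≅ 𝟙 ⊗ X → 𝔸 ⊗ X → (X ⊗ X^∨) ⊗ X ≅ X ⊗ (X^∨ ⊗ X) → X ⊗ 𝟙 ≅ X (using f ▷ X, then π_X ▷ X, then X ◁ d_X) is well defined (its components are natural) and is an isomorphism of k-algebras, where End(𝟭_C), the k-algebra of natural endomorphisms of the identity functor under composition, is the zeroth Hochschild cohomology HH^0(C). -/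

import Mathlib

/-!
Let `k` be a commutative ring and `C` a `k`-linear rigid monoidal category
(composition and tensor product of morphisms are `k`-bilinear) in which the
canonical end `𝔸 = ∫_{X ∈ C} X ⊗ X^∨` exists, equipped with the multiplication
`γ : 𝔸 ⊗ 𝔸 ⟶ 𝔸` determined by `π_X ∘ γ = (X ◁ d_X ▷ X^∨) ∘ (π_X ⊗ π_X)` and
the unit `u : 𝟙 ⟶ 𝔸` determined by `π_X ∘ u = b_X`.  Equip `C(𝟙, 𝔸)` with the
product `f · g := γ ∘ (f ⊗ g) ∘ λ_𝟙⁻¹` and unit `u`.  Then the map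
`Θ : C(𝟙, 𝔸) → End(𝟭_C)` sending `f` to the natural endomorphism of the
identity functor with components
`X ≅ 𝟙 ⊗ X ⟶ 𝔸 ⊗ X ⟶ (X ⊗ X^∨) ⊗ X ≅ X ⊗ (X^∨ ⊗ X) ⟶ X ⊗ 𝟙 ≅ X`
is well defined (its components are natural) and an isomorphism of
`k`-algebras onto `End(𝟭_C) = HH⁰(C)`.
-/

open CategoryTheory MonoidalCategory

namespace Stmt13

variable (C : Type*) [Category C] [MonoidalCategory C] [RigidCategory C]

/-- The canonical end `𝔸 = ∫_{X ∈ C} X ⊗ X^∨`. -/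
structure CanonicalEnd where
  obj : C
  π : ∀ X : C, obj ⟶ X ⊗ (Xᘁ : C)
  wedge : ∀ {X Y : C} (f : X ⟶ Y), π X ≫ (f ▷ (Xᘁ : C)) = π Y ≫ (Y ◁ (fᘁ))
  lift : ∀ {A : C} (p : ∀ X : C, A ⟶ X ⊗ (Xᘁ : C)),
    (∀ {X Y : C} (f : X ⟶ Y), p X ≫ (f ▷ (Xᘁ : C)) = p Y ≫ (Y ◁ (fᘁ))) → (A ⟶ obj)
  fac : ∀ {A : C} (p : ∀ X : C, A ⟶ X ⊗ (Xᘁ : C))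
    (hp : ∀ {X Y : C} (f : X ⟶ Y), p X ≫ (f ▷ (Xᘁ : C)) = p Y ≫ (Y ◁ (fᘁ)))
    (X : C), lift p hp ≫ π X = p X
  uniq : ∀ {A : C} (p : ∀ X : C, A ⟶ X ⊗ (Xᘁ : C))
    (hp : ∀ {X Y : C} (f : X ⟶ Y), p X ≫ (f ▷ (Xᘁ : C)) = p Y ≫ (Y ◁ (fᘁ)))
    (m : A ⟶ obj), (∀ X : C, m ≫ π X = p X) → m = lift p hp

variable {C}

/-- The contraction `(X ⊗ X^∨) ⊗ (X ⊗ X^∨) ⟶ X ⊗ X^∨` of the middle two tensor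
factors by the evaluation. -/
noncomputable def contraction (X : C) :
    (X ⊗ (Xᘁ : C)) ⊗ (X ⊗ (Xᘁ : C)) ⟶ X ⊗ (Xᘁ : C) :=
  (α_ X (Xᘁ) (X ⊗ (Xᘁ : C))).hom ≫
    (X ◁ ((α_ ((Xᘁ : C)) X ((Xᘁ : C))).inv ≫ ((ε_ X (Xᘁ)) ▷ ((Xᘁ : C))) ≫
      (λ_ ((Xᘁ : C))).hom))

/-- The component at `X` of the natural endomorphism of the identity functor
associated with `f : 𝟙 ⟶ 𝔸`:
`X ≅ 𝟙 ⊗ X ⟶ 𝔸 ⊗ X ⟶ (X ⊗ X^∨) ⊗ X ≅ X ⊗ (X^∨ ⊗ X) ⟶ X ⊗ 𝟙 ≅ X`. -/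
noncomputable def component (E : CanonicalEnd C) (f : 𝟙_ C ⟶ E.obj) (X : C) :
    X ⟶ X :=
  (λ_ X).inv ≫ (f ▷ X) ≫ ((E.π X) ▷ X) ≫ (α_ X ((Xᘁ : C)) X).hom ≫
    (X ◁ (ε_ X (Xᘁ))) ≫ (ρ_ X).hom

/-- Auxiliary: the "action" of a coname `g : 𝟙 ⟶ X ⊗ Xᘁ` on `X`. -/
noncomputable def act (X : C) (g : 𝟙_ C ⟶ X ⊗ (Xᘁ : C)) : X ⟶ X :=
  (λ_ X).inv ≫ (g ▷ X) ≫ (α_ X ((Xᘁ : C)) X).hom ≫ (X ◁ (ε_ X (Xᘁ))) ≫ (ρ_ X).hom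

theorem component_eq_act (E : CanonicalEnd C) (f : 𝟙_ C ⟶ E.obj) (X : C) :
    component E f X = act X (f ≫ E.π X) := by
  simp [component, act]

/-- Snake identity: the name of `act X g` is `g`. -/
theorem snake (X : C) (g : 𝟙_ C ⟶ X ⊗ (Xᘁ : C)) :
    η_ X (Xᘁ) ≫ (act X g ▷ (Xᘁ : C)) = g := by
  dsimp [act]
  calc
    η_ X (Xᘁ) ≫ (((λ_ X).inv ≫ g ▷ X ≫ (α_ X ((Xᘁ : C)) X).hom ≫
        X ◁ ε_ X (Xᘁ) ≫ (ρ_ X).hom) ▷ (Xᘁ : C))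
      = 𝟙 _ ⊗≫ (𝟙_ C ◁ η_ X (Xᘁ) ≫ g ▷ (X ⊗ (Xᘁ : C))) ⊗≫
          X ◁ (ε_ X (Xᘁ) ▷ (Xᘁ : C)) ⊗≫ 𝟙 _ := by
        monoidal
    _ = 𝟙 _ ⊗≫ (g ▷ 𝟙_ C ≫ (X ⊗ (Xᘁ : C)) ◁ η_ X (Xᘁ)) ⊗≫
          X ◁ (ε_ X (Xᘁ) ▷ (Xᘁ : C)) ⊗≫ 𝟙 _ := by
        rw [whisker_exchange]
    _ = 𝟙 _ ⊗≫ g ⊗≫ X ◁ ((Xᘁ : C) ◁ η_ X (Xᘁ) ≫ (α_ _ _ _).inv ≫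
          ε_ X (Xᘁ) ▷ (Xᘁ : C)) ⊗≫ 𝟙 _ := by
        monoidal
    _ = 𝟙 _ ⊗≫ g ⊗≫ X ◁ ((ρ_ ((Xᘁ : C))).hom ≫ (λ_ ((Xᘁ : C))).inv) ⊗≫ 𝟙 _ := by
        rw [ExactPairing.coevaluation_evaluation]
    _ = g := by monoidal

/-- The other snake identity: acting by a name. -/
theorem snake' (X : C) (a : X ⟶ X) :
    act X (η_ X (Xᘁ) ≫ (a ▷ (Xᘁ : C))) = a := by
  dsimp [act]
  calc
    (λ_ X).inv ≫ (η_ X (Xᘁ) ≫ a ▷ (Xᘁ : C)) ▷ X ≫ (α_ X ((Xᘁ : C)) X).hom ≫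
        X ◁ ε_ X (Xᘁ) ≫ (ρ_ X).hom
      = 𝟙 _ ⊗≫ η_ X (Xᘁ) ▷ X ⊗≫
          (a ▷ ((Xᘁ : C) ⊗ X) ≫ X ◁ ε_ X (Xᘁ)) ⊗≫ 𝟙 _ := by
        monoidal
    _ = 𝟙 _ ⊗≫ η_ X (Xᘁ) ▷ X ⊗≫ (X ◁ ε_ X (Xᘁ) ≫ a ▷ 𝟙_ C) ⊗≫ 𝟙 _ := by
        rw [← whisker_exchange]
    _ = 𝟙 _ ⊗≫ (η_ X (Xᘁ) ▷ X ≫ (α_ X ((Xᘁ : C)) X).hom ≫ X ◁ ε_ X (Xᘁ)) ⊗≫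
          a ⊗≫ 𝟙 _ := by
        monoidal
    _ = 𝟙 _ ⊗≫ ((λ_ X).hom ≫ (ρ_ X).inv) ⊗≫ a ⊗≫ 𝟙 _ := by
        rw [ExactPairing.evaluation_coevaluation]
    _ = a := by monoidal

/-- Naturality of the components. -/
theorem component_natural (E : CanonicalEnd C) (f : 𝟙_ C ⟶ E.obj)
    {X Y : C} (h : X ⟶ Y) :
    component E f X ≫ h = h ≫ component E f Y := by
  dsimp [component]
  calc
    ((λ_ X).inv ≫ f ▷ X ≫ E.π X ▷ X ≫ (α_ X ((Xᘁ : C)) X).hom ≫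
        X ◁ ε_ X (Xᘁ) ≫ (ρ_ X).hom) ≫ h
      = 𝟙 _ ⊗≫ f ▷ X ⊗≫ E.π X ▷ X ⊗≫
          (X ◁ ε_ X (Xᘁ) ≫ h ▷ 𝟙_ C) ⊗≫ 𝟙 _ := by
        monoidal
    _ = 𝟙 _ ⊗≫ f ▷ X ⊗≫ E.π X ▷ X ⊗≫
          (h ▷ ((Xᘁ : C) ⊗ X) ≫ Y ◁ ε_ X (Xᘁ)) ⊗≫ 𝟙 _ := by
        rw [whisker_exchange]
    _ = 𝟙 _ ⊗≫ f ▷ X ⊗≫ ((E.π X ≫ h ▷ (Xᘁ : C)) ▷ X) ⊗≫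
          Y ◁ ε_ X (Xᘁ) ⊗≫ 𝟙 _ := by
        rw [comp_whiskerRight]; monoidal
    _ = 𝟙 _ ⊗≫ f ▷ X ⊗≫ ((E.π Y ≫ Y ◁ (hᘁ)) ▷ X) ⊗≫
          Y ◁ ε_ X (Xᘁ) ⊗≫ 𝟙 _ := by
        rw [E.wedge h]
    _ = 𝟙 _ ⊗≫ f ▷ X ⊗≫ E.π Y ▷ X ⊗≫
          Y ◁ ((hᘁ) ▷ X ≫ ε_ X (Xᘁ)) ⊗≫ 𝟙 _ := by
        rw [comp_whiskerRight]; monoidal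
    _ = 𝟙 _ ⊗≫ f ▷ X ⊗≫ E.π Y ▷ X ⊗≫
          Y ◁ (((Yᘁ) : C) ◁ h ≫ ε_ Y (Yᘁ)) ⊗≫ 𝟙 _ := by
        rw [rightAdjointMate_comp_evaluation]
    _ = 𝟙 _ ⊗≫ f ▷ X ⊗≫ (E.π Y ▷ X ≫ (Y ⊗ ((Yᘁ) : C)) ◁ h) ⊗≫
          Y ◁ ε_ Y (Yᘁ) ⊗≫ 𝟙 _ := by
        monoidal
    _ = 𝟙 _ ⊗≫ (f ▷ X ≫ E.obj ◁ h) ⊗≫ E.π Y ▷ Y ⊗≫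
          Y ◁ ε_ Y (Yᘁ) ⊗≫ 𝟙 _ := by
        rw [← whisker_exchange]; monoidal
    _ = 𝟙 _ ⊗≫ (𝟙_ C ◁ h ≫ f ▷ Y) ⊗≫ E.π Y ▷ Y ⊗≫
          Y ◁ ε_ Y (Yᘁ) ⊗≫ 𝟙 _ := by
        rw [← whisker_exchange]
    _ = h ≫ (λ_ Y).inv ≫ f ▷ Y ≫ E.π Y ▷ Y ≫ (α_ Y ((Yᘁ) : C) Y).hom ≫
          Y ◁ ε_ Y (Yᘁ) ≫ (ρ_ Y).hom := by
        monoidal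

/-- Multiplicativity of `act` w.r.t. the convolution of conames. -/
theorem act_mul (X : C) (F G : 𝟙_ C ⟶ X ⊗ (Xᘁ : C)) :
    act X ((λ_ (𝟙_ C)).inv ≫ (F ⊗ₘ G) ≫ contraction X) = act X G ≫ act X F := by
  dsimp [act, contraction]
  calc
    (λ_ X).inv ≫ ((λ_ (𝟙_ C)).inv ≫ (F ⊗ₘ G) ≫ (α_ X (Xᘁ) (X ⊗ (Xᘁ : C))).hom ≫
        X ◁ ((α_ ((Xᘁ : C)) X ((Xᘁ : C))).inv ≫ ε_ X (Xᘁ) ▷ ((Xᘁ : C)) ≫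
          (λ_ ((Xᘁ : C))).hom)) ▷ X ≫
        (α_ X ((Xᘁ : C)) X).hom ≫ X ◁ ε_ X (Xᘁ) ≫ (ρ_ X).hom
      = 𝟙 _ ⊗≫ F ▷ X ⊗≫ (X ⊗ (Xᘁ : C)) ◁ (G ▷ X) ⊗≫
          ((X ◁ ε_ X (Xᘁ)) ▷ (((Xᘁ : C)) ⊗ X) ≫ (X ⊗ 𝟙_ C) ◁ ε_ X (Xᘁ)) ⊗≫
          𝟙 _ := by
        rw [MonoidalCategory.tensorHom_def]; monoidal
    _ = 𝟙 _ ⊗≫ F ▷ X ⊗≫ (X ⊗ (Xᘁ : C)) ◁ (G ▷ X) ⊗≫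
          ((X ⊗ (((Xᘁ : C)) ⊗ X)) ◁ ε_ X (Xᘁ) ≫ (X ◁ ε_ X (Xᘁ)) ▷ 𝟙_ C) ⊗≫
          𝟙 _ := by
        rw [← whisker_exchange]
    _ = 𝟙 _ ⊗≫ (F ▷ X ≫ (X ⊗ (Xᘁ : C)) ◁ ((λ_ X).inv ≫ G ▷ X ≫
          (α_ X ((Xᘁ : C)) X).hom ≫ X ◁ ε_ X (Xᘁ) ≫ (ρ_ X).hom)) ⊗≫
          X ◁ ε_ X (Xᘁ) ⊗≫ 𝟙 _ := by
        monoidal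
    _ = 𝟙 _ ⊗≫ (𝟙_ C ◁ ((λ_ X).inv ≫ G ▷ X ≫ (α_ X ((Xᘁ : C)) X).hom ≫
          X ◁ ε_ X (Xᘁ) ≫ (ρ_ X).hom) ≫ F ▷ X) ⊗≫
          X ◁ ε_ X (Xᘁ) ⊗≫ 𝟙 _ := by
        rw [← whisker_exchange]
    _ = ((λ_ X).inv ≫ G ▷ X ≫ (α_ X ((Xᘁ : C)) X).hom ≫ X ◁ ε_ X (Xᘁ) ≫
          (ρ_ X).hom) ≫ (λ_ X).inv ≫ F ▷ X ≫ (α_ X ((Xᘁ : C)) X).hom ≫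
          X ◁ ε_ X (Xᘁ) ≫ (ρ_ X).hom := by
        monoidal

theorem act_one (X : C) : act X (η_ X (Xᘁ)) = 𝟙 X := by
  have := snake' X (𝟙 X)
  simpa using this

theorem homUnitCanonicalEnd_iso_endIdentityFunctor
    (k : Type*) [CommRing k] [Preadditive C] [CategoryTheory.Linear k C]
    [MonoidalPreadditive C] [MonoidalLinear k C]
    (E : CanonicalEnd C) (γ : E.obj ⊗ E.obj ⟶ E.obj) (u : 𝟙_ C ⟶ E.obj)
    (hγ : ∀ X : C, γ ≫ E.π X = (E.π X ⊗ₘ E.π X) ≫ contraction X)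
    (hu : ∀ X : C, u ≫ E.π X = η_ X (Xᘁ)) :
    ∃ Θ : (𝟙_ C ⟶ E.obj) → CategoryTheory.End (𝟭 C),
      (∀ (f : 𝟙_ C ⟶ E.obj) (X : C), (Θ f).app X = component E f X) ∧
      Function.Bijective Θ ∧
      (∀ f g : 𝟙_ C ⟶ E.obj, Θ (f + g) = Θ f + Θ g) ∧
      (∀ (a : k) (f : 𝟙_ C ⟶ E.obj), Θ (a • f) = a • Θ f) ∧
      (∀ f g : 𝟙_ C ⟶ E.obj,
        Θ ((λ_ (𝟙_ C)).inv ≫ (f ⊗ₘ g) ≫ γ) = Θ f * Θ g) ∧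
      Θ u = 1 := by
  refine ⟨fun f => ⟨fun X => component E f X, ?_⟩, fun f X => rfl, ?_, ?_, ?_, ?_, ?_⟩
  · intro X Y h
    dsimp
    exact (component_natural E f h).symm
  · -- Bijectivity via the explicit inverse given by the universal property.
    have hp : ∀ (α : CategoryTheory.End (𝟭 C)) {X Y : C} (h : X ⟶ Y),
        (η_ X (Xᘁ) ≫ (α.app X ▷ (Xᘁ : C))) ≫ (h ▷ (Xᘁ : C)) =
        (η_ Y (Yᘁ) ≫ (α.app Y ▷ ((Yᘁ) : C))) ≫ (Y ◁ (hᘁ)) := by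
      intro α X Y h
      have hnat : α.app X ≫ h = h ≫ α.app Y := by
        simpa using (α.naturality h).symm
      rw [Category.assoc, ← comp_whiskerRight, hnat, comp_whiskerRight,
        ← Category.assoc, ← coevaluation_comp_rightAdjointMate,
        Category.assoc, Category.assoc, whisker_exchange]
    refine Function.bijective_iff_has_inverse.2
      ⟨fun α => E.lift (fun X => η_ X (Xᘁ) ≫ (α.app X ▷ (Xᘁ : C))) (hp α), ?_, ?_⟩
    · intro f
      refine (E.uniq _ _ f fun X => ?_).symm
      dsimp
      rw [component_eq_act, snake]
    · intro α
      apply NatTrans.ext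
      funext X
      have hfac := E.fac (fun X => η_ X (Xᘁ) ≫ (α.app X ▷ (Xᘁ : C))) (hp α) X
      dsimp
      rw [component_eq_act, hfac, snake']
  · intro f g
    apply NatTrans.ext
    funext X
    dsimp
    show component E (f + g) X = component E f X + component E g X
    simp [component, MonoidalPreadditive.add_whiskerRight]
  · intro a f
    apply NatTrans.ext
    funext X
    dsimp
    rw [NatTrans.app_smul]
    dsimp
    simp [component, MonoidalLinear.smul_whiskerRight, Linear.smul_comp, Linear.comp_smul]
  · intro f g
    apply NatTrans.ext
    funext X
    dsimp
    show component E ((λ_ (𝟙_ C)).inv ≫ (f ⊗ₘ g) ≫ γ) X =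
      component E g X ≫ component E f X
    rw [component_eq_act, component_eq_act, component_eq_act, ← act_mul]
    congr 1
    rw [Category.assoc, Category.assoc, hγ X, ← Category.assoc ((f : 𝟙_ C ⟶ E.obj) ⊗ₘ g),
      tensorHom_comp_tensorHom]
  · apply NatTrans.ext
    funext X
    dsimp
    rw [component_eq_act, hu, act_one]

end Stmt13
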